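/- Integrality of hedonic equilibrium (Theorem 2(iii)): if n x and m y are nonnegative integers for every x and y (i.e., n and m take values in ℕ), then there exists a hedonic equilibrium (p, μˢ, μᵈ) in which every value μˢ x z and μᵈ z y is a nonnegative integer. -/

import Mathlib

set_option linter.unusedSectionVars false
set_option linter.unusedVariables false
set_option maxHeartbeats 1000000


open Finset MeasureTheory Real

variable {X Y Z : Type*} [Fintype X] [Fintype Y] [Fintype Z]
  [Nonempty X] [Nonempty Y] [Nonempty Z]

/-- A pair of supply/demand functions is a feasible flow. -/
def FeasibleFlow (n : X → ℝ) (m : Y → ℝ) (μs : X → Z → ℝ) (μd : Z → Y → ℝ) : Prop :=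
  (∀ x z, 0 ≤ μs x z) ∧ (∀ z y, 0 ≤ μd z y) ∧
    (∀ x, ∑ z, μs x z ≤ n x) ∧ (∀ y, ∑ z, μd z y ≤ m y) ∧
    (∀ z, ∑ x, μs x z = ∑ y, μd z y)

/-- Indirect utility of a producer of type `x` facing prices `p`. -/
noncomputable def indirectU (α : X → Z → ℝ) (p : Z → ℝ) (x : X) : ℝ :=
  max (univ.sup' univ_nonempty fun z => α x z + p z) 0

/-- Indirect utility of a consumer of type `y` facing prices `p`. -/
noncomputable def indirectV (γ : Z → Y → ℝ) (p : Z → ℝ) (y : Y) : ℝ :=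
  max (univ.sup' univ_nonempty fun z => γ z y - p z) 0

/-- A triple `(p, μs, μd)` is a hedonic equilibrium. -/
def HedonicEquilibrium (n : X → ℝ) (m : Y → ℝ) (α : X → Z → ℝ) (γ : Z → Y → ℝ)
    (p : Z → ℝ) (μs : X → Z → ℝ) (μd : Z → Y → ℝ) : Prop :=
  FeasibleFlow n m μs μd ∧
    (∀ x z, 0 < μs x z → α x z + p z = indirectU α p x) ∧
    (∀ z y, 0 < μd z y → γ z y - p z = indirectV γ p y) ∧
    (∀ x, 0 < indirectU α p x → ∑ z, μs x z = n x) ∧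
    (∀ y, 0 < indirectV γ p y → ∑ z, μd z y = m y)

/-- Primal (social welfare) objective of a flow. -/
def primalObj (α : X → Z → ℝ) (γ : Z → Y → ℝ) (μs : X → Z → ℝ) (μd : Z → Y → ℝ) : ℝ :=
  (∑ x, ∑ z, μs x z * α x z) + ∑ z, ∑ y, μd z y * γ z y

/-- Dual feasibility of surpluses and prices. -/
def DualFeasible (α : X → Z → ℝ) (γ : Z → Y → ℝ) (u : X → ℝ) (v : Y → ℝ) (p : Z → ℝ) : Prop :=
  (∀ x, 0 ≤ u x) ∧ (∀ y, 0 ≤ v y) ∧ (∀ x z, α x z + p z ≤ u x) ∧ (∀ z y, γ z y - p z ≤ v y)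

/-- Dual objective. -/
def dualObj (n : X → ℝ) (m : Y → ℝ) (u : X → ℝ) (v : Y → ℝ) : ℝ :=
  (∑ x, n x * u x) + ∑ y, m y * v y


lemma indirectU_nonneg (α : X → Z → ℝ) (p : Z → ℝ) (x : X) : 0 ≤ indirectU α p x :=
  le_max_right _ _

lemma indirectV_nonneg (γ : Z → Y → ℝ) (p : Z → ℝ) (y : Y) : 0 ≤ indirectV γ p y :=
  le_max_right _ _

lemma le_indirectU (α : X → Z → ℝ) (p : Z → ℝ) (x : X) (z : Z) :
    α x z + p z ≤ indirectU α p x :=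
  le_trans (Finset.le_sup' (fun z => α x z + p z) (mem_univ z)) (le_max_left _ _)

lemma le_indirectV (γ : Z → Y → ℝ) (p : Z → ℝ) (y : Y) (z : Z) :
    γ z y - p z ≤ indirectV γ p y :=
  le_trans (Finset.le_sup' (fun z => γ z y - p z) (mem_univ z)) (le_max_left _ _)

lemma indirectU_le (α : X → Z → ℝ) (p : Z → ℝ) (x : X) {c : ℝ}
    (h0 : 0 ≤ c) (h : ∀ z, α x z + p z ≤ c) : indirectU α p x ≤ c :=
  max_le (Finset.sup'_le _ _ fun z _ => h z) h0

lemma indirectV_le (γ : Z → Y → ℝ) (p : Z → ℝ) (y : Y) {c : ℝ}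
    (h0 : 0 ≤ c) (h : ∀ z, γ z y - p z ≤ c) : indirectV γ p y ≤ c :=
  max_le (Finset.sup'_le _ _ fun z _ => h z) h0

lemma indirectU_exists_eq (α : X → Z → ℝ) (p : Z → ℝ) (x : X)
    (h : 0 < indirectU α p x) : ∃ z, α x z + p z = indirectU α p x := by
  obtain ⟨z, _, hz⟩ := Finset.exists_mem_eq_sup' (univ_nonempty (α := Z)) (fun z => α x z + p z)
  refine ⟨z, ?_⟩
  unfold indirectU at *
  rcases max_cases (univ.sup' univ_nonempty fun z => α x z + p z) (0:ℝ) with ⟨h1, _⟩ | ⟨h1, h2⟩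
  · rw [h1, hz]
  · exfalso; rw [h1] at h; exact lt_irrefl _ h

lemma indirectV_exists_eq (γ : Z → Y → ℝ) (p : Z → ℝ) (y : Y)
    (h : 0 < indirectV γ p y) : ∃ z, γ z y - p z = indirectV γ p y := by
  obtain ⟨z, _, hz⟩ := Finset.exists_mem_eq_sup' (univ_nonempty (α := Z)) (fun z => γ z y - p z)
  refine ⟨z, ?_⟩
  unfold indirectV at *
  rcases max_cases (univ.sup' univ_nonempty fun z => γ z y - p z) (0:ℝ) with ⟨h1, _⟩ | ⟨h1, h2⟩
  · rw [h1, hz]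
  · exfalso; rw [h1] at h; exact lt_irrefl _ h

/-- The dual objective as a function of prices. -/
noncomputable def Dfun (k : X → ℕ) (l : Y → ℕ) (α : X → Z → ℝ) (γ : Z → Y → ℝ)
    (p : Z → ℝ) : ℝ :=
  (∑ x, (k x : ℝ) * indirectU α p x) + ∑ y, (l y : ℝ) * indirectV γ p y

lemma Dfun_continuous (k : X → ℕ) (l : Y → ℕ) (α : X → Z → ℝ) (γ : Z → Y → ℝ) :
    Continuous (Dfun k l α γ) := by
  apply Continuous.add <;> apply continuous_finset_sum <;> intro i _ <;>
    apply Continuous.mul continuous_const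
  · exact Continuous.max
      (Continuous.finset_sup'_apply univ_nonempty
        (fun z _ => (continuous_const).add (continuous_apply z)))
      continuous_const
  · exact Continuous.max
      (Continuous.finset_sup'_apply univ_nonempty
        (fun z _ => (continuous_const).sub (continuous_apply z)))
      continuous_const

/-- existence of a global minimizer of the dual objective -/
lemma exists_min_Dfun (k : X → ℕ) (l : Y → ℕ) (α : X → Z → ℝ) (γ : Z → Y → ℝ) :
    ∃ p : Z → ℝ, ∀ q : Z → ℝ, Dfun k l α γ p ≤ Dfun k l α γ q := by
  obtain ⟨A, hA0, hAα, hAγ⟩ : ∃ A : ℝ, 0 ≤ A ∧ (∀ x z, |α x z| ≤ A) ∧ (∀ z y, |γ z y| ≤ A) := by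
    obtain ⟨A1, hA1⟩ := Finset.exists_le (Finset.univ.image fun xz : X × Z => |α xz.1 xz.2|)
    obtain ⟨A2, hA2⟩ := Finset.exists_le (Finset.univ.image fun zy : Z × Y => |γ zy.1 zy.2|)
    refine ⟨max 0 (max A1 A2), le_max_left _ _, fun x z => ?_, fun z y => ?_⟩
    · exact le_trans (hA1 _ (mem_image_of_mem _ (mem_univ (x, z))))
        (le_trans (le_max_left _ _) (le_max_right _ _))
    · exact le_trans (hA2 _ (mem_image_of_mem _ (mem_univ (z, y))))
        (le_trans (le_max_right _ _) (le_max_right _ _))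
  set Box : Set (Z → ℝ) := Set.Icc (fun _ => -A) (fun _ => A) with hBox
  have hcpt : IsCompact Box := isCompact_Icc
  have hne : Box.Nonempty := ⟨fun _ => 0, fun z => by simp; linarith, fun z => by simp; linarith⟩
  obtain ⟨p, hpBox, hpmin⟩ := hcpt.exists_isMinOn hne (Dfun_continuous k l α γ).continuousOn
  refine ⟨p, fun q => ?_⟩
  set cq : Z → ℝ := fun z => max (-A) (min A (q z)) with hcq
  have hlow : ∀ z, cq z ≤ q z ∨ cq z = -A := by
    intro z
    rcases le_total (q z) A with h1 | h1
    · rcases le_total (-A) (q z) with h2 | h2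
      · left; simp [hcq, min_eq_right h1, max_eq_right h2]
      · right; simp [hcq, min_eq_right h1, max_eq_left h2]
    · left
      simp only [hcq, min_eq_left h1]
      rw [max_eq_right (by linarith : -A ≤ A)]; exact h1
  have hhigh : ∀ z, q z ≤ cq z ∨ cq z = A := by
    intro z
    rcases le_total (q z) A with h1 | h1
    · rcases le_total (-A) (q z) with h2 | h2
      · left; simp [hcq, min_eq_right h1, max_eq_right h2]
      · left; simp [hcq, min_eq_right h1, max_eq_left h2]; linarith
    · right
      simp only [hcq, min_eq_left h1]
      exact max_eq_right (by linarith : -A ≤ A)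
  have hcqBox : cq ∈ Box := by
    refine ⟨fun z => le_max_left _ _, fun z => ?_⟩
    rcases le_total (-A) (min A (q z)) with h | h
    · show max _ _ ≤ A; rw [max_eq_right h]; exact min_le_left _ _
    · show max _ _ ≤ A; rw [max_eq_left h]; linarith
  have key : Dfun k l α γ cq ≤ Dfun k l α γ q := by
    unfold Dfun
    apply add_le_add <;> apply Finset.sum_le_sum <;> intro i _ <;>
      apply mul_le_mul_of_nonneg_left _ (Nat.cast_nonneg _)
    · apply indirectU_le _ _ _ (indirectU_nonneg _ _ _)
      intro z
      rcases hlow z with h | h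
      · exact le_trans (by linarith) (le_indirectU α q i z)
      · rw [h]
        have : α i z + -A ≤ 0 := by have := (abs_le.mp (hAα i z)).2; linarith
        exact le_trans this (indirectU_nonneg _ _ _)
    · apply indirectV_le _ _ _ (indirectV_nonneg _ _ _)
      intro z
      rcases hhigh z with h | h
      · exact le_trans (by linarith) (le_indirectV γ q i z)
      · rw [h]
        have : γ z i - A ≤ 0 := by have := (abs_le.mp (hAγ z i)).2; linarith
        exact le_trans this (indirectV_nonneg _ _ _)
  exact le_trans (hpmin hcqBox) key

open scoped Classical

section KeyIneq

variable (k : X → ℕ) (l : Y → ℕ) (α : X → Z → ℝ) (γ : Z → Y → ℝ) (p : Z → ℝ)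

/-- argmax sets (level sets of the indirect utilities) -/
noncomputable def Aset (x : X) : Finset Z :=
  univ.filter fun z => α x z + p z = indirectU α p x

noncomputable def Bset (y : Y) : Finset Z :=
  univ.filter fun z => γ z y - p z = indirectV γ p y

/-- a uniform positive "gap" below all relevant positive quantities -/
noncomputable def gapSet : Finset ℝ :=
  ((univ.image fun xz : X × Z => indirectU α p xz.1 - (α xz.1 xz.2 + p xz.2)) ∪
   (univ.image fun zy : Z × Y => indirectV γ p zy.2 - (γ zy.1 zy.2 - p zy.1)) ∪
   (univ.image fun x : X => indirectU α p x) ∪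
   (univ.image fun y : Y => indirectV γ p y)).filter fun r => 0 < r

noncomputable def tgap : ℝ := (insert 1 (gapSet α γ p)).min' (insert_nonempty _ _)

lemma tgap_pos : 0 < tgap α γ p := by
  have : ∀ r ∈ insert 1 (gapSet α γ p), 0 < r := by
    intro r hr
    rcases mem_insert.mp hr with h | h
    · rw [h]; norm_num
    · exact (mem_filter.mp h).2
  exact this _ (min'_mem _ _)

lemma tgap_le {r : ℝ} (h : 0 < r) (hmem : r ∈ gapSet α γ p ∨ r = 1) : tgap α γ p ≤ r := by
  rcases hmem with h' | h'
  · exact min'_le _ _ (mem_insert_of_mem h')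
  · rw [h']; exact min'_le _ _ (mem_insert_self _ _)

lemma tgap_le_gapU {x : X} {z : Z} (h : α x z + p z < indirectU α p x) :
    α x z + p z ≤ indirectU α p x - tgap α γ p := by
  have hm : indirectU α p x - (α x z + p z) ∈ gapSet α γ p := by
    apply mem_filter.mpr
    constructor
    · apply mem_union_left; apply mem_union_left; apply mem_union_left
      exact mem_image_of_mem _ (mem_univ (x, z))
    · linarith
  have := tgap_le α γ p (by linarith) (Or.inl hm)
  linarith

lemma tgap_le_gapV {z : Z} {y : Y} (h : γ z y - p z < indirectV γ p y) :
    γ z y - p z ≤ indirectV γ p y - tgap α γ p := by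
  have hm : indirectV γ p y - (γ z y - p z) ∈ gapSet α γ p := by
    apply mem_filter.mpr
    constructor
    · apply mem_union_left; apply mem_union_left; apply mem_union_right
      exact mem_image_of_mem _ (mem_univ (z, y))
    · linarith
  have := tgap_le α γ p (by linarith) (Or.inl hm)
  linarith

lemma tgap_le_U {x : X} (h : 0 < indirectU α p x) : tgap α γ p ≤ indirectU α p x := by
  apply tgap_le α γ p h
  left
  apply mem_filter.mpr
  exact ⟨mem_union_left _ (mem_union_right _ (mem_image_of_mem _ (mem_univ x))), h⟩

lemma tgap_le_V {y : Y} (h : 0 < indirectV γ p y) : tgap α γ p ≤ indirectV γ p y := by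
  apply tgap_le α γ p h
  left
  apply mem_filter.mpr
  exact ⟨mem_union_right _ (mem_image_of_mem _ (mem_univ y)), h⟩

/-- Key inequality for producers: mass of demanding producers whose argmax set is inside `W`
is at most the mass of consumers whose level set meets `W`. -/
lemma key_producer (hmin : ∀ q : Z → ℝ, Dfun k l α γ p ≤ Dfun k l α γ q) (W : Finset Z) :
    ∑ x ∈ univ.filter (fun x => 0 < indirectU α p x ∧ Aset α p x ⊆ W), k x ≤
    ∑ y ∈ univ.filter (fun y => (Bset γ p y ∩ W).Nonempty), l y := by
  set t := tgap α γ p with ht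
  have ht0 : 0 < t := tgap_pos α γ p
  set p' : Z → ℝ := fun z => p z - (if z ∈ W then t else 0) with hp'
  have hple : ∀ z, p' z ≤ p z := by
    intro z; simp only [hp']; split <;> linarith
  -- bound on u

  have hu1 : ∀ x, indirectU α p' x ≤ indirectU α p x := by
    intro x
    apply indirectU_le _ _ _ (indirectU_nonneg _ _ _)
    intro z
    exact le_trans (by have := hple z; linarith) (le_indirectU α p x z)
  have hu2 : ∀ x, 0 < indirectU α p x → Aset α p x ⊆ W →
      indirectU α p' x ≤ indirectU α p x - t := by
    intro x hx hAW
    apply indirectU_le _ _ _ (by have := tgap_le_U α γ p hx; linarith)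
    intro z
    by_cases hz : α x z + p z = indirectU α p x
    · have hzA : z ∈ Aset α p x := mem_filter.mpr ⟨mem_univ z, hz⟩
      have hzW : z ∈ W := hAW hzA
      simp only [hp', if_pos hzW]
      linarith
    · have hlt : α x z + p z < indirectU α p x := lt_of_le_of_ne (le_indirectU α p x z) hz
      have := tgap_le_gapU α γ p hlt
      have := hple z
      linarith
  have hv1 : ∀ y, indirectV γ p' y ≤ indirectV γ p y + t := by
    intro y
    apply indirectV_le _ _ _ (by have := indirectV_nonneg γ p y; linarith)
    intro z
    have : p z - t ≤ p' z := by simp only [hp']; split <;> linarith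
    have h2 := le_indirectV γ p y z
    linarith
  have hv2 : ∀ y, ¬(Bset γ p y ∩ W).Nonempty → indirectV γ p' y ≤ indirectV γ p y := by
    intro y hy
    apply indirectV_le _ _ _ (indirectV_nonneg _ _ _)
    intro z
    by_cases hzW : z ∈ W
    · have hzB : z ∉ Bset γ p y := by
        intro hz; exact hy ⟨z, mem_inter.mpr ⟨hz, hzW⟩⟩
      have hne : γ z y - p z ≠ indirectV γ p y := by
        intro h; exact hzB (mem_filter.mpr ⟨mem_univ z, h⟩)
      have hlt : γ z y - p z < indirectV γ p y :=
        lt_of_le_of_ne (le_indirectV γ p y z) hne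
      have := tgap_le_gapV α γ p hlt
      simp only [hp', if_pos hzW]
      linarith
    · simp only [hp', if_neg hzW]
      have := le_indirectV γ p y z
      linarith
  -- combine
  have hD := hmin p'
  unfold Dfun at hD
  set SP := univ.filter (fun x => 0 < indirectU α p x ∧ Aset α p x ⊆ W) with hSP
  set SC := univ.filter (fun y => (Bset γ p y ∩ W).Nonempty) with hSC
  have hsum1 : ∑ x, (k x : ℝ) * indirectU α p' x ≤
      (∑ x, (k x : ℝ) * indirectU α p x) - t * ∑ x ∈ SP, (k x : ℝ) := by
    rw [Finset.mul_sum]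
    rw [← Finset.sum_filter_add_sum_filter_not univ
      (fun x => 0 < indirectU α p x ∧ Aset α p x ⊆ W) (fun x => (k x:ℝ) * indirectU α p' x),
      ← Finset.sum_filter_add_sum_filter_not univ
      (fun x => 0 < indirectU α p x ∧ Aset α p x ⊆ W) (fun x => (k x:ℝ) * indirectU α p x)]
    have e1 : ∑ x ∈ SP, (k x : ℝ) * indirectU α p' x ≤
        ∑ x ∈ SP, ((k x : ℝ) * indirectU α p x - t * (k x : ℝ)) := by
      apply Finset.sum_le_sum
      intro x hx
      obtain ⟨_, hx1, hx2⟩ := mem_filter.mp hx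
      have := hu2 x hx1 hx2
      nlinarith [Nat.cast_nonneg (α := ℝ) (k x)]
    have e2 : ∑ x ∈ univ.filter (fun x => ¬(0 < indirectU α p x ∧ Aset α p x ⊆ W)),
        (k x : ℝ) * indirectU α p' x ≤
        ∑ x ∈ univ.filter (fun x => ¬(0 < indirectU α p x ∧ Aset α p x ⊆ W)),
        (k x : ℝ) * indirectU α p x := by
      apply Finset.sum_le_sum
      intro x _
      exact mul_le_mul_of_nonneg_left (hu1 x) (Nat.cast_nonneg _)
    rw [Finset.sum_sub_distrib] at e1
    linarith
  have hsum2 : ∑ y, (l y : ℝ) * indirectV γ p' y ≤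
      (∑ y, (l y : ℝ) * indirectV γ p y) + t * ∑ y ∈ SC, (l y : ℝ) := by
    rw [Finset.mul_sum]
    rw [← Finset.sum_filter_add_sum_filter_not univ
      (fun y => (Bset γ p y ∩ W).Nonempty) (fun y => (l y:ℝ) * indirectV γ p' y),
      ← Finset.sum_filter_add_sum_filter_not univ
      (fun y => (Bset γ p y ∩ W).Nonempty) (fun y => (l y:ℝ) * indirectV γ p y)]
    have e1 : ∑ y ∈ SC, (l y : ℝ) * indirectV γ p' y ≤
        ∑ y ∈ SC, ((l y : ℝ) * indirectV γ p y + t * (l y : ℝ)) := by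
      apply Finset.sum_le_sum
      intro y hy
      have := hv1 y
      nlinarith [Nat.cast_nonneg (α := ℝ) (l y)]
    have e2 : ∑ y ∈ univ.filter (fun y => ¬(Bset γ p y ∩ W).Nonempty),
        (l y : ℝ) * indirectV γ p' y ≤
        ∑ y ∈ univ.filter (fun y => ¬(Bset γ p y ∩ W).Nonempty),
        (l y : ℝ) * indirectV γ p y := by
      apply Finset.sum_le_sum
      intro y hy
      exact mul_le_mul_of_nonneg_left (hv2 y (mem_filter.mp hy).2) (Nat.cast_nonneg _)
    rw [Finset.sum_add_distrib] at e1
    linarith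
  have hfinal : t * ∑ x ∈ SP, (k x : ℝ) ≤ t * ∑ y ∈ SC, (l y : ℝ) := by linarith
  have := le_of_mul_le_mul_left (by linarith : t * ∑ x ∈ SP, (k x:ℝ) ≤ t * ∑ y ∈ SC, (l y:ℝ)) ht0
  have hcast : ((∑ x ∈ SP, k x : ℕ) : ℝ) ≤ ((∑ y ∈ SC, l y : ℕ) : ℝ) := by
    push_cast
    exact this
  exact_mod_cast hcast

end KeyIneq

section KeyIneq2

variable (k : X → ℕ) (l : Y → ℕ) (α : X → Z → ℝ) (γ : Z → Y → ℝ) (p : Z → ℝ)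

/-- Key inequality for consumers. -/
lemma key_consumer (hmin : ∀ q : Z → ℝ, Dfun k l α γ p ≤ Dfun k l α γ q) (W : Finset Z) :
    ∑ y ∈ univ.filter (fun y => 0 < indirectV γ p y ∧ Bset γ p y ⊆ W), l y ≤
    ∑ x ∈ univ.filter (fun x => (Aset α p x ∩ W).Nonempty), k x := by
  set t := tgap α γ p with ht
  have ht0 : 0 < t := tgap_pos α γ p
  set p' : Z → ℝ := fun z => p z + (if z ∈ W then t else 0) with hp'
  have hple : ∀ z, p z ≤ p' z := by
    intro z; simp only [hp']; split <;> linarith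
  have hv1 : ∀ y, indirectV γ p' y ≤ indirectV γ p y := by
    intro y
    apply indirectV_le _ _ _ (indirectV_nonneg _ _ _)
    intro z
    exact le_trans (by have := hple z; linarith) (le_indirectV γ p y z)
  have hv2 : ∀ y, 0 < indirectV γ p y → Bset γ p y ⊆ W →
      indirectV γ p' y ≤ indirectV γ p y - t := by
    intro y hy hBW
    apply indirectV_le _ _ _ (by have := tgap_le_V α γ p hy; linarith)
    intro z
    by_cases hz : γ z y - p z = indirectV γ p y
    · have hzB : z ∈ Bset γ p y := mem_filter.mpr ⟨mem_univ z, hz⟩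
      have hzW : z ∈ W := hBW hzB
      simp only [hp', if_pos hzW]
      linarith
    · have hlt : γ z y - p z < indirectV γ p y := lt_of_le_of_ne (le_indirectV γ p y z) hz
      have := tgap_le_gapV α γ p hlt
      have := hple z
      linarith
  have hu1 : ∀ x, indirectU α p' x ≤ indirectU α p x + t := by
    intro x
    apply indirectU_le _ _ _ (by have := indirectU_nonneg α p x; linarith)
    intro z
    have : p' z ≤ p z + t := by simp only [hp']; split <;> linarith
    have h2 := le_indirectU α p x z
    linarith
  have hu2 : ∀ x, ¬(Aset α p x ∩ W).Nonempty → indirectU α p' x ≤ indirectU α p x := by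
    intro x hx
    apply indirectU_le _ _ _ (indirectU_nonneg _ _ _)
    intro z
    by_cases hzW : z ∈ W
    · have hzA : z ∉ Aset α p x := by
        intro hz; exact hx ⟨z, mem_inter.mpr ⟨hz, hzW⟩⟩
      have hne : α x z + p z ≠ indirectU α p x := by
        intro h; exact hzA (mem_filter.mpr ⟨mem_univ z, h⟩)
      have hlt : α x z + p z < indirectU α p x :=
        lt_of_le_of_ne (le_indirectU α p x z) hne
      have := tgap_le_gapU α γ p hlt
      simp only [hp', if_pos hzW]
      linarith
    · simp only [hp', if_neg hzW]
      have := le_indirectU α p x z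
      linarith
  have hD := hmin p'
  unfold Dfun at hD
  set SC := univ.filter (fun y => 0 < indirectV γ p y ∧ Bset γ p y ⊆ W) with hSC
  set SP := univ.filter (fun x => (Aset α p x ∩ W).Nonempty) with hSP
  have hsum1 : ∑ y, (l y : ℝ) * indirectV γ p' y ≤
      (∑ y, (l y : ℝ) * indirectV γ p y) - t * ∑ y ∈ SC, (l y : ℝ) := by
    rw [Finset.mul_sum]
    rw [← Finset.sum_filter_add_sum_filter_not univ
      (fun y => 0 < indirectV γ p y ∧ Bset γ p y ⊆ W) (fun y => (l y:ℝ) * indirectV γ p' y),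
      ← Finset.sum_filter_add_sum_filter_not univ
      (fun y => 0 < indirectV γ p y ∧ Bset γ p y ⊆ W) (fun y => (l y:ℝ) * indirectV γ p y)]
    have e1 : ∑ y ∈ SC, (l y : ℝ) * indirectV γ p' y ≤
        ∑ y ∈ SC, ((l y : ℝ) * indirectV γ p y - t * (l y : ℝ)) := by
      apply Finset.sum_le_sum
      intro y hy
      obtain ⟨_, hy1, hy2⟩ := mem_filter.mp hy
      have := hv2 y hy1 hy2
      nlinarith [Nat.cast_nonneg (α := ℝ) (l y)]
    have e2 : ∑ y ∈ univ.filter (fun y => ¬(0 < indirectV γ p y ∧ Bset γ p y ⊆ W)),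
        (l y : ℝ) * indirectV γ p' y ≤
        ∑ y ∈ univ.filter (fun y => ¬(0 < indirectV γ p y ∧ Bset γ p y ⊆ W)),
        (l y : ℝ) * indirectV γ p y := by
      apply Finset.sum_le_sum
      intro y _
      exact mul_le_mul_of_nonneg_left (hv1 y) (Nat.cast_nonneg _)
    rw [Finset.sum_sub_distrib] at e1
    linarith
  have hsum2 : ∑ x, (k x : ℝ) * indirectU α p' x ≤
      (∑ x, (k x : ℝ) * indirectU α p x) + t * ∑ x ∈ SP, (k x : ℝ) := by
    rw [Finset.mul_sum]
    rw [← Finset.sum_filter_add_sum_filter_not univ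
      (fun x => (Aset α p x ∩ W).Nonempty) (fun x => (k x:ℝ) * indirectU α p' x),
      ← Finset.sum_filter_add_sum_filter_not univ
      (fun x => (Aset α p x ∩ W).Nonempty) (fun x => (k x:ℝ) * indirectU α p x)]
    have e1 : ∑ x ∈ SP, (k x : ℝ) * indirectU α p' x ≤
        ∑ x ∈ SP, ((k x : ℝ) * indirectU α p x + t * (k x : ℝ)) := by
      apply Finset.sum_le_sum
      intro x hx
      have := hu1 x
      nlinarith [Nat.cast_nonneg (α := ℝ) (k x)]
    have e2 : ∑ x ∈ univ.filter (fun x => ¬(Aset α p x ∩ W).Nonempty),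
        (k x : ℝ) * indirectU α p' x ≤
        ∑ x ∈ univ.filter (fun x => ¬(Aset α p x ∩ W).Nonempty),
        (k x : ℝ) * indirectU α p x := by
      apply Finset.sum_le_sum
      intro x hx
      exact mul_le_mul_of_nonneg_left (hu2 x (mem_filter.mp hx).2) (Nat.cast_nonneg _)
    rw [Finset.sum_add_distrib] at e1
    linarith
  have : ∑ y ∈ SC, (l y : ℝ) ≤ ∑ x ∈ SP, (k x : ℝ) :=
    le_of_mul_le_mul_left (by linarith) ht0
  have hcast : ((∑ y ∈ SC, l y : ℕ) : ℝ) ≤ ((∑ x ∈ SP, k x : ℕ) : ℝ) := by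
    push_cast
    exact this
  exact_mod_cast hcast

end KeyIneq2

/-- Mendelsohn–Dulmage: combine a matching saturating `Pd` with a matching saturating `Cd`
into a single matching saturating both. -/
lemma mendelsohn_dulmage {P C : Type*} [Fintype P] [Fintype C]
    (adj : P → C → Prop) (Pd : Set P) (Cd : Set C)
    (f : Pd → C) (hf : Function.Injective f) (hfa : ∀ i, adj i.1 (f i))
    (g : Cd → P) (hg : Function.Injective g) (hga : ∀ j, adj (g j) j.1) :
    ∃ M : Set (P × C),
      (∀ pc ∈ M, adj pc.1 pc.2) ∧
      (∀ pc ∈ M, ∀ pc' ∈ M, pc.1 = pc'.1 → pc = pc') ∧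
      (∀ pc ∈ M, ∀ pc' ∈ M, pc.2 = pc'.2 → pc = pc') ∧
      (∀ a ∈ Pd, ∃ c, (a, c) ∈ M) ∧ (∀ c ∈ Cd, ∃ a, (a, c) ∈ M) := by
  classical
  set Good : Set Cd → Prop := fun S =>
    (∀ j : Cd, (j : C) ∉ Set.range f → j ∈ S) ∧
    (∀ j ∈ S, ∀ h : g j ∈ Pd, ∀ hc : f ⟨g j, h⟩ ∈ Cd, (⟨f ⟨g j, h⟩, hc⟩ : Cd) ∈ S)
    with hGood
  set U : Set Cd := ⋂₀ {S | Good S} with hU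
  have hUgood : Good U := by
    constructor
    · intro j hj
      rw [hU]
      exact Set.mem_sInter.mpr fun S hS => hS.1 j hj
    · intro j hjU h hc
      rw [hU]
      exact Set.mem_sInter.mpr fun S hS => hS.2 j (Set.mem_sInter.mp hjU S hS) h hc
  have hUleast : ∀ S, Good S → U ⊆ S := fun S hS => Set.sInter_subset_of_mem hS
  -- inversion principle
  have hInv : ∀ j ∈ U, ((j : C) ∉ Set.range f) ∨
      ∃ j', j' ∈ U ∧ ∃ h : g j' ∈ Pd, f ⟨g j', h⟩ = (j : C) := by
    set S : Set Cd := {j | j ∈ U ∧ (((j : C) ∉ Set.range f) ∨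
      ∃ j', j' ∈ U ∧ ∃ h : g j' ∈ Pd, f ⟨g j', h⟩ = (j : C))} with hS
    have hSgood : Good S := by
      constructor
      · intro j hj
        exact ⟨hUgood.1 j hj, Or.inl hj⟩
      · intro j hjS h hc
        refine ⟨hUgood.2 j hjS.1 h hc, Or.inr ⟨j, hjS.1, h, rfl⟩⟩
    intro j hj
    exact (hUleast S hSgood hj).2
  -- the combined matching
  set stolen : Pd → Prop := fun i => ∃ j, j ∈ U ∧ g j = (i : P) with hstolen
  set M : Set (P × C) := {pc | (∃ j : Cd, j ∈ U ∧ pc = ((g j : P), (j : C))) ∨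
      (∃ i : Pd, ¬ stolen i ∧ pc = ((i : P), f i))} with hM
  refine ⟨M, ?_, ?_, ?_, ?_, ?_⟩
  · rintro pc (⟨j, hj, rfl⟩ | ⟨i, hi, rfl⟩)
    · exact hga j
    · exact hfa i
  · rintro pc (⟨j, hj, rfl⟩ | ⟨i, hi, rfl⟩) pc' (⟨j', hj', rfl⟩ | ⟨i', hi', rfl⟩) hfst
    · simp only at hfst; rw [hg hfst]
    · exact absurd ⟨j, hj, hfst⟩ hi'
    · exact absurd ⟨j', hj', hfst.symm⟩ hi
    · simp only at hfst; rw [Subtype.ext hfst]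
  · rintro pc (⟨j, hj, rfl⟩ | ⟨i, hi, rfl⟩) pc' (⟨j', hj', rfl⟩ | ⟨i', hi', rfl⟩) hsnd
    · simp only at hsnd; rw [Subtype.ext hsnd]
    · -- (g j, j) and (i', f i') with j = f i' : contradiction with ¬ stolen i'
      exfalso
      simp only at hsnd
      rcases hInv j hj with hnr | ⟨j', hj'U, h, hfe⟩
      · exact hnr ⟨i', hsnd.symm⟩
      · have : (⟨g j', h⟩ : Pd) = i' := hf (by rw [hfe, hsnd])
        exact hi' ⟨j', hj'U, by rw [← this]⟩
    · exfalso
      simp only at hsnd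
      rcases hInv j' hj' with hnr | ⟨j'', hj''U, h, hfe⟩
      · exact hnr ⟨i, hsnd⟩
      · have : (⟨g j'', h⟩ : Pd) = i := hf (by rw [hfe, ← hsnd])
        exact hi ⟨j'', hj''U, by rw [← this]⟩
    · rw [hf hsnd]
  · -- covers Pd
    intro a ha
    set i : Pd := ⟨a, ha⟩ with hi
    by_cases hst : stolen i
    · obtain ⟨j, hjU, hgj⟩ := hst
      exact ⟨(j : C), Or.inl ⟨j, hjU, by rw [hgj]⟩⟩
    · exact ⟨f i, Or.inr ⟨i, hst, rfl⟩⟩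
  · -- covers Cd
    intro c hc
    set j : Cd := ⟨c, hc⟩ with hj
    by_cases hjU : j ∈ U
    · exact ⟨g j, Or.inl ⟨j, hjU, rfl⟩⟩
    · have hr : (j : C) ∈ Set.range f := by
        by_contra hnr
        exact hjU (hUgood.1 j hnr)
      obtain ⟨i, hfi⟩ := hr
      refine ⟨(i : P), Or.inr ⟨i, ?_, by rw [hfi]⟩⟩
      intro ⟨j', hj'U, hgj'⟩
      have hmem : g j' ∈ Pd := by rw [hgj']; exact i.2
      have heq : (⟨g j', hmem⟩ : Pd) = i := Subtype.ext hgj'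
      have hfc : f ⟨g j', hmem⟩ ∈ Cd := by rw [heq, hfi]; exact hc
      have hjU2 := hUgood.2 j' hj'U hmem hfc
      have : (⟨f ⟨g j', hmem⟩, hfc⟩ : Cd) = j := by
        apply Subtype.ext
        show f ⟨g j', hmem⟩ = (j : C)
        rw [heq, hfi]
      rw [this] at hjU2
      exact hjU hjU2

/-- card of a filter on a sigma type where the predicate only depends on the base -/
lemma sigma_filter_card {I : Type*} [Fintype I] (c : I → ℕ) (Q : I → Prop) [DecidablePred Q] :
    (univ.filter fun pu : Σ i, Fin (c i) => Q pu.1).card = ∑ i ∈ univ.filter Q, c i := by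
  have : (univ.filter fun pu : Σ i, Fin (c i) => Q pu.1) =
      (univ.filter Q).sigma fun _ => (univ : Finset (Fin _)) := by
    ext pu
    simp [Finset.mem_sigma]
  rw [this, Finset.card_sigma]
  simp

section HallApp

variable (k : X → ℕ) (l : Y → ℕ) (α : X → Z → ℝ) (γ : Z → Y → ℝ) (p : Z → ℝ)

/-- producer units -/
abbrev PUnit' (k : X → ℕ) := Σ x : X, Fin (k x)
/-- consumer units -/
abbrev CUnit' (l : Y → ℕ) := Σ y : Y, Fin (l y)

/-- unit-level adjacency -/
def adjP (pu : PUnit' k) (cu : CUnit' l) : Prop :=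
  (Aset α p pu.1 ∩ Bset γ p cu.1).Nonempty

lemma hall_producer (hmin : ∀ q : Z → ℝ, Dfun k l α γ p ≤ Dfun k l α γ q) :
    ∃ f : {pu : PUnit' k // 0 < indirectU α p pu.1} → CUnit' l,
      Function.Injective f ∧ ∀ i, adjP k l α γ p i.1 (f i) := by
  have hcond : ∀ s : Finset {pu : PUnit' k // 0 < indirectU α p pu.1},
      s.card ≤ (s.biUnion (fun i =>
        univ.filter fun cu : CUnit' l => adjP k l α γ p i.1 cu)).card := ?_
  case _ =>
    obtain ⟨f, hf, hfa⟩ := (Finset.all_card_le_biUnion_card_iff_exists_injective _).mp hcond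
    exact ⟨f, hf, fun i => (mem_filter.mp (hfa i)).2⟩
  intro s
  set W : Finset Z := s.biUnion (fun i => Aset α p i.1.1) with hW
  -- step 1
  have h1 : s.card ≤ (univ.filter fun pu : PUnit' k =>
      0 < indirectU α p pu.1 ∧ Aset α p pu.1 ⊆ W).card := by
    apply Finset.card_le_card_of_injOn (fun i => i.1)
    · intro i hi
      apply mem_filter.mpr
      refine ⟨mem_univ _, i.2, fun z hz => ?_⟩
      exact Finset.mem_biUnion.mpr ⟨i, hi, hz⟩
    · intro a _ b _ hab
      exact Subtype.ext hab
  have h2 : (univ.filter fun pu : PUnit' k =>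
      0 < indirectU α p pu.1 ∧ Aset α p pu.1 ⊆ W).card =
      ∑ x ∈ univ.filter (fun x => 0 < indirectU α p x ∧ Aset α p x ⊆ W), k x :=
    sigma_filter_card k (fun x => 0 < indirectU α p x ∧ Aset α p x ⊆ W)
  have h3 := key_producer k l α γ p hmin W
  have h4 : ∑ y ∈ univ.filter (fun y => (Bset γ p y ∩ W).Nonempty), l y =
      (univ.filter fun cu : CUnit' l => (Bset γ p cu.1 ∩ W).Nonempty).card :=
    (sigma_filter_card l (fun y => (Bset γ p y ∩ W).Nonempty)).symm
  have h5 : (univ.filter fun cu : CUnit' l => (Bset γ p cu.1 ∩ W).Nonempty) ⊆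
      s.biUnion (fun i => univ.filter fun cu : CUnit' l => adjP k l α γ p i.1 cu) := by
    intro cu hcu
    obtain ⟨z, hz⟩ := (mem_filter.mp hcu).2
    have hzB := mem_inter.mp hz
    obtain ⟨i, hi, hzA⟩ := Finset.mem_biUnion.mp hzB.2
    apply Finset.mem_biUnion.mpr
    exact ⟨i, hi, mem_filter.mpr ⟨mem_univ _, ⟨z, mem_inter.mpr ⟨hzA, hzB.1⟩⟩⟩⟩
  calc s.card ≤ _ := h1
    _ = _ := h2
    _ ≤ _ := h3
    _ = _ := h4
    _ ≤ _ := Finset.card_le_card h5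

lemma hall_consumer (hmin : ∀ q : Z → ℝ, Dfun k l α γ p ≤ Dfun k l α γ q) :
    ∃ g : {cu : CUnit' l // 0 < indirectV γ p cu.1} → PUnit' k,
      Function.Injective g ∧ ∀ j, adjP k l α γ p (g j) j.1 := by
  have hcond : ∀ s : Finset {cu : CUnit' l // 0 < indirectV γ p cu.1},
      s.card ≤ (s.biUnion (fun j =>
        univ.filter fun pu : PUnit' k => adjP k l α γ p pu j.1)).card := ?_
  case _ =>
    obtain ⟨g, hg, hga⟩ := (Finset.all_card_le_biUnion_card_iff_exists_injective _).mp hcond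
    exact ⟨g, hg, fun j => (mem_filter.mp (hga j)).2⟩
  intro s
  set W : Finset Z := s.biUnion (fun j => Bset γ p j.1.1) with hW
  have h1 : s.card ≤ (univ.filter fun cu : CUnit' l =>
      0 < indirectV γ p cu.1 ∧ Bset γ p cu.1 ⊆ W).card := by
    apply Finset.card_le_card_of_injOn (fun j => j.1)
    · intro j hj
      apply mem_filter.mpr
      refine ⟨mem_univ _, j.2, fun z hz => ?_⟩
      exact Finset.mem_biUnion.mpr ⟨j, hj, hz⟩
    · intro a _ b _ hab
      exact Subtype.ext hab
  have h2 : (univ.filter fun cu : CUnit' l =>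
      0 < indirectV γ p cu.1 ∧ Bset γ p cu.1 ⊆ W).card =
      ∑ y ∈ univ.filter (fun y => 0 < indirectV γ p y ∧ Bset γ p y ⊆ W), l y :=
    sigma_filter_card l (fun y => 0 < indirectV γ p y ∧ Bset γ p y ⊆ W)
  have h3 := key_consumer k l α γ p hmin W
  have h4 : ∑ x ∈ univ.filter (fun x => (Aset α p x ∩ W).Nonempty), k x =
      (univ.filter fun pu : PUnit' k => (Aset α p pu.1 ∩ W).Nonempty).card :=
    (sigma_filter_card k (fun x => (Aset α p x ∩ W).Nonempty)).symm
  have h5 : (univ.filter fun pu : PUnit' k => (Aset α p pu.1 ∩ W).Nonempty) ⊆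
      s.biUnion (fun j => univ.filter fun pu : PUnit' k => adjP k l α γ p pu j.1) := by
    intro pu hpu
    obtain ⟨z, hz⟩ := (mem_filter.mp hpu).2
    have hzA := mem_inter.mp hz
    obtain ⟨j, hj, hzB⟩ := Finset.mem_biUnion.mp hzA.2
    apply Finset.mem_biUnion.mpr
    exact ⟨j, hj, mem_filter.mpr ⟨mem_univ _, ⟨z, mem_inter.mpr ⟨hzA.1, hzB⟩⟩⟩⟩
  calc s.card ≤ _ := h1
    _ = _ := h2
    _ ≤ _ := h3
    _ = _ := h4
    _ ≤ _ := Finset.card_le_card h5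

end HallApp

theorem main_construction (k : X → ℕ) (l : Y → ℕ) (α : X → Z → ℝ) (γ : Z → Y → ℝ) :
    ∃ (p : Z → ℝ) (μs : X → Z → ℝ) (μd : Z → Y → ℝ),
      HedonicEquilibrium (fun x => (k x : ℝ)) (fun y => (l y : ℝ)) α γ p μs μd ∧
        (∀ x z, ∃ c : ℕ, μs x z = c) ∧ (∀ z y, ∃ c : ℕ, μd z y = c) := by
  obtain ⟨p, hmin⟩ := exists_min_Dfun k l α γ
  obtain ⟨f, hf, hfa⟩ := hall_producer k l α γ p hmin
  obtain ⟨g, hg, hga⟩ := hall_consumer k l α γ p hmin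
  obtain ⟨M, hMadj, hMleft, hMright, hMP, hMC⟩ :=
    mendelsohn_dulmage (adjP k l α γ p)
      {pu : PUnit' k | 0 < indirectU α p pu.1} {cu : CUnit' l | 0 < indirectV γ p cu.1}
      f hf hfa g hg hga
  set MF : Finset (PUnit' k × CUnit' l) := (Set.toFinite M).toFinset with hMF
  have hMFmem : ∀ pc, pc ∈ MF ↔ pc ∈ M := fun pc => Set.Finite.mem_toFinset _
  set q : PUnit' k × CUnit' l → Z := fun pc =>
    if h : (Aset α p pc.1.1 ∩ Bset γ p pc.2.1).Nonempty then h.choose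
    else Classical.arbitrary Z with hqdef
  have hq : ∀ pc ∈ MF, q pc ∈ Aset α p pc.1.1 ∧ q pc ∈ Bset γ p pc.2.1 := by
    intro pc hpc
    have hadj : adjP k l α γ p pc.1 pc.2 := hMadj pc ((hMFmem pc).mp hpc)
    have hadj' : (Aset α p pc.1.1 ∩ Bset γ p pc.2.1).Nonempty := hadj
    have hqe : q pc = hadj'.choose := by
      simp only [hqdef]
      exact dif_pos hadj'
    rw [hqe]
    exact ⟨(mem_inter.mp hadj'.choose_spec).1, (mem_inter.mp hadj'.choose_spec).2⟩
  set μs : X → Z → ℝ := fun x z => ((MF.filter fun pc => pc.1.1 = x ∧ q pc = z).card : ℝ)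
    with hμs
  set μd : Z → Y → ℝ := fun z y => ((MF.filter fun pc => pc.2.1 = y ∧ q pc = z).card : ℝ)
    with hμd
  -- row sums
  have hrowP : ∀ x, ∑ z, μs x z = ((MF.filter fun pc => pc.1.1 = x).card : ℝ) := by
    intro x
    have h1 : (MF.filter fun pc => pc.1.1 = x).card =
        ∑ z, ((MF.filter fun pc => pc.1.1 = x).filter fun pc => q pc = z).card :=
      Finset.card_eq_sum_card_fiberwise (fun pc _ => mem_univ (q pc))
    simp only [Finset.filter_filter] at h1
    simp only [hμs]
    rw [← Nat.cast_sum]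
    exact Nat.cast_inj.mpr h1.symm
  have hrowC : ∀ y, ∑ z, μd z y = ((MF.filter fun pc => pc.2.1 = y).card : ℝ) := by
    intro y
    have h1 : (MF.filter fun pc => pc.2.1 = y).card =
        ∑ z, ((MF.filter fun pc => pc.2.1 = y).filter fun pc => q pc = z).card :=
      Finset.card_eq_sum_card_fiberwise (fun pc _ => mem_univ (q pc))
    simp only [Finset.filter_filter] at h1
    simp only [hμd]
    rw [← Nat.cast_sum]
    exact Nat.cast_inj.mpr h1.symm
  -- capacity
  have hcapP : ∀ x, (MF.filter fun pc => pc.1.1 = x).card ≤ k x := by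
    intro x
    have := Finset.card_le_card_of_injOn (fun pc => ((pc.1.2 : ℕ)))
      (s := MF.filter fun pc => pc.1.1 = x) (t := Finset.range (k x)) ?_ ?_
    · simpa using this
    · intro pc hpc
      have hx : pc.1.1 = x := (mem_filter.mp hpc).2
      rw [Finset.mem_coe, Finset.mem_range, ← hx]
      exact pc.1.2.isLt
    · intro a ha b hb hval
      have hax : a.1.1 = x := (mem_filter.mp ha).2
      have hbx : b.1.1 = x := (mem_filter.mp hb).2
      have hfst : a.1 = b.1 := by
        apply Sigma.ext (by rw [hax, hbx])
        exact (Fin.heq_ext_iff (by rw [hax, hbx])).mpr hval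
      exact hMleft a ((hMFmem a).mp (mem_filter.mp ha).1)
        b ((hMFmem b).mp (mem_filter.mp hb).1) hfst
  have hcapC : ∀ y, (MF.filter fun pc => pc.2.1 = y).card ≤ l y := by
    intro y
    have := Finset.card_le_card_of_injOn (fun pc => ((pc.2.2 : ℕ)))
      (s := MF.filter fun pc => pc.2.1 = y) (t := Finset.range (l y)) ?_ ?_
    · simpa using this
    · intro pc hpc
      have hy : pc.2.1 = y := (mem_filter.mp hpc).2
      rw [Finset.mem_coe, Finset.mem_range, ← hy]
      exact pc.2.2.isLt
    · intro a ha b hb hval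
      have hay : a.2.1 = y := (mem_filter.mp ha).2
      have hby : b.2.1 = y := (mem_filter.mp hb).2
      have hsnd : a.2 = b.2 := by
        apply Sigma.ext (by rw [hay, hby])
        exact (Fin.heq_ext_iff (by rw [hay, hby])).mpr hval
      exact hMright a ((hMFmem a).mp (mem_filter.mp ha).1)
        b ((hMFmem b).mp (mem_filter.mp hb).1) hsnd
  -- saturation of demanding types
  have hsatP : ∀ x, 0 < indirectU α p x → k x ≤ (MF.filter fun pc => pc.1.1 = x).card := by
    intro x hx
    have hex : ∀ i : Fin (k x), ∃ c, ((⟨x, i⟩ : PUnit' k), c) ∈ M := by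
      intro i
      exact hMP ⟨x, i⟩ hx
    choose cf hcf using hex
    have := Finset.card_le_card_of_injOn (fun i : Fin (k x) => ((⟨x, i⟩ : PUnit' k), cf i))
      (s := Finset.univ) (t := MF.filter fun pc => pc.1.1 = x) ?_ ?_
    · simpa using this
    · intro i _
      exact mem_filter.mpr ⟨(hMFmem _).mpr (hcf i), rfl⟩
    · intro a _ b _ hab
      have := congrArg Prod.fst hab
      simp only [Sigma.mk.inj_iff, heq_eq_eq, true_and] at this
      exact this
  have hsatC : ∀ y, 0 < indirectV γ p y → l y ≤ (MF.filter fun pc => pc.2.1 = y).card := by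
    intro y hy
    have hex : ∀ j : Fin (l y), ∃ a, (a, (⟨y, j⟩ : CUnit' l)) ∈ M := by
      intro j
      exact hMC ⟨y, j⟩ hy
    choose pf hpf using hex
    have := Finset.card_le_card_of_injOn (fun j : Fin (l y) => (pf j, (⟨y, j⟩ : CUnit' l)))
      (s := Finset.univ) (t := MF.filter fun pc => pc.2.1 = y) ?_ ?_
    · simpa using this
    · intro j _
      exact mem_filter.mpr ⟨(hMFmem _).mpr (hpf j), rfl⟩
    · intro a _ b _ hab
      have := congrArg Prod.snd hab
      simp only [Sigma.mk.inj_iff, heq_eq_eq, true_and] at this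
      exact this
  -- market clearing
  have hclear : ∀ z, ∑ x, μs x z = ∑ y, μd z y := by
    intro z
    have h1 : (MF.filter fun pc => q pc = z).card =
        ∑ x, ((MF.filter fun pc => q pc = z).filter fun pc => pc.1.1 = x).card :=
      Finset.card_eq_sum_card_fiberwise (fun pc _ => mem_univ pc.1.1)
    have h2 : (MF.filter fun pc => q pc = z).card =
        ∑ y, ((MF.filter fun pc => q pc = z).filter fun pc => pc.2.1 = y).card :=
      Finset.card_eq_sum_card_fiberwise (fun pc _ => mem_univ pc.2.1)
    simp only [Finset.filter_filter] at h1 h2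
    have e1 : ∀ x, (MF.filter fun pc => q pc = z ∧ pc.1.1 = x) =
        (MF.filter fun pc => pc.1.1 = x ∧ q pc = z) := by
      intro x; ext pc; simp [mem_filter]; tauto
    have e2 : ∀ y, (MF.filter fun pc => q pc = z ∧ pc.2.1 = y) =
        (MF.filter fun pc => pc.2.1 = y ∧ q pc = z) := by
      intro y; ext pc; simp [mem_filter]; tauto
    simp only [e1] at h1
    simp only [e2] at h2
    simp only [hμs, hμd]
    rw [← Nat.cast_sum, ← Nat.cast_sum]
    exact_mod_cast congrArg (Nat.cast (R := ℝ)) (h1.symm.trans h2)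
  refine ⟨p, μs, μd, ⟨⟨?_, ?_, ?_, ?_, ?_⟩, ?_, ?_, ?_, ?_⟩, ?_, ?_⟩
  · intro x z; exact Nat.cast_nonneg _
  · intro z y; exact Nat.cast_nonneg _
  · intro x
    rw [hrowP x]
    exact Nat.cast_le.mpr (hcapP x)
  · intro y
    rw [hrowC y]
    exact Nat.cast_le.mpr (hcapC y)
  · exact hclear
  · -- producer rationality
    intro x z hpos
    have hpos' : (0:ℝ) < ((MF.filter fun pc => pc.1.1 = x ∧ q pc = z).card : ℝ) := hpos
    have hne : (MF.filter fun pc => pc.1.1 = x ∧ q pc = z).Nonempty := by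
      rw [← Finset.card_pos]
      exact_mod_cast hpos'
    obtain ⟨pc, hpc⟩ := hne
    obtain ⟨hx, hz⟩ := (mem_filter.mp hpc).2
    have hqA := (hq pc (mem_filter.mp hpc).1).1
    rw [hx, hz] at hqA
    exact (mem_filter.mp hqA).2
  · -- consumer rationality
    intro z y hpos
    have hpos' : (0:ℝ) < ((MF.filter fun pc => pc.2.1 = y ∧ q pc = z).card : ℝ) := hpos
    have hne : (MF.filter fun pc => pc.2.1 = y ∧ q pc = z).Nonempty := by
      rw [← Finset.card_pos]
      exact_mod_cast hpos'
    obtain ⟨pc, hpc⟩ := hne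
    obtain ⟨hy, hz⟩ := (mem_filter.mp hpc).2
    have hqB := (hq pc (mem_filter.mp hpc).1).2
    rw [hy, hz] at hqB
    exact (mem_filter.mp hqB).2
  · intro x hx
    rw [hrowP x]
    exact Nat.cast_inj.mpr (le_antisymm (hcapP x) (hsatP x hx))
  · intro y hy
    rw [hrowC y]
    exact Nat.cast_inj.mpr (le_antisymm (hcapC y) (hsatC y hy))
  · intro x z; exact ⟨_, rfl⟩
  · intro z y; exact ⟨_, rfl⟩

/-- Theorem 2(iii): if the masses are integral, there is an integral hedonic equilibrium. -/
theorem integral_hedonic_equilibrium_exists (n : X → ℝ) (m : Y → ℝ)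
    (hn : ∀ x, ∃ k : ℕ, n x = k) (hm : ∀ y, ∃ k : ℕ, m y = k)
    (α : X → Z → ℝ) (γ : Z → Y → ℝ) :
    ∃ (p : Z → ℝ) (μs : X → Z → ℝ) (μd : Z → Y → ℝ),
      HedonicEquilibrium n m α γ p μs μd ∧
        (∀ x z, ∃ k : ℕ, μs x z = k) ∧ (∀ z y, ∃ k : ℕ, μd z y = k) := by
  choose k hk using hn
  choose l hl using hm
  obtain ⟨p, μs, μd, heq, hs, hd⟩ := main_construction k l α γ
  refine ⟨p, μs, μd, ?_, hs, hd⟩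
  have hn' : n = fun x => (k x : ℝ) := funext hk
  have hm' : m = fun y => (l y : ℝ) := funext hl
  rw [hn', hm']
  exact heq
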